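/- Let n, d be positive integers, y : Fin n → ℝ, and x : Fin n → Fin (d+1) → ℝ. The function g(p, q) = n log q + ∑_{i=1}^n (y_i q − ∑_{j=0}^d p_j x_{ij}) − 2 ∑_{i=1}^n log(1 + exp(y_i q − ∑_{j=0}^d p_j x_{ij})) is concave on the convex set {(p, q) ∈ ℝ^{d+1} × ℝ : q > 0}. -/

import Mathlib

open Finset

lemma my_convexOn_log_one_add_exp : ConvexOn ℝ Set.univ (fun t => Real.log (1 + Real.exp t)) := by
  have h1 : ∀ t : ℝ, (0:ℝ) < 1 + Real.exp t := fun t => by positivity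
  refine convexOn_of_hasDerivWithinAt2_nonneg convex_univ
    (f' := fun t => Real.exp t / (1 + Real.exp t))
    (f'' := fun t => Real.exp t / (1 + Real.exp t)^2) ?_ ?_ ?_ ?_
  · exact (Continuous.log (continuous_const.add Real.continuous_exp) (fun t => (h1 t).ne')).continuousOn
  · intro t _
    have : HasDerivAt (fun t => Real.log (1 + Real.exp t)) (Real.exp t / (1 + Real.exp t)) t := by
      exact (HasDerivAt.log ((Real.hasDerivAt_exp t).const_add 1) (h1 t).ne')
    exact this.hasDerivWithinAt
  · intro t _
    have hd : HasDerivAt (fun t => Real.exp t / (1 + Real.exp t))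
        ((Real.exp t * (1 + Real.exp t) - Real.exp t * Real.exp t) / (1 + Real.exp t)^2) t :=
      (Real.hasDerivAt_exp t).div ((Real.hasDerivAt_exp t).const_add 1) (h1 t).ne'
    have : (Real.exp t * (1 + Real.exp t) - Real.exp t * Real.exp t) / (1 + Real.exp t)^2
        = Real.exp t / (1 + Real.exp t)^2 := by ring_nf
    rw [this] at hd
    exact hd.hasDerivWithinAt
  · intro t _
    positivity

lemma my_concaveOn_sum {ι E : Type*} [AddCommGroup E] [Module ℝ E] {s : Set E}
    (hs : Convex ℝ s) (t : Finset ι) (f : ι → E → ℝ)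
    (h : ∀ i ∈ t, ConcaveOn ℝ s (f i)) :
    ConcaveOn ℝ s (fun z => ∑ i ∈ t, f i z) := by
  classical
  induction t using Finset.induction_on with
  | empty => simpa using concaveOn_const (0:ℝ) hs
  | insert _ _ hnot ih =>
    simp only [Finset.sum_insert hnot]
    exact (h _ (Finset.mem_insert_self _ _)).add
      (ih fun i hi => h i (Finset.mem_insert_of_mem hi))

lemma my_convexOn_sum {ι E : Type*} [AddCommGroup E] [Module ℝ E] {s : Set E}
    (hs : Convex ℝ s) (t : Finset ι) (f : ι → E → ℝ)
    (h : ∀ i ∈ t, ConvexOn ℝ s (f i)) :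
    ConvexOn ℝ s (fun z => ∑ i ∈ t, f i z) := by
  classical
  induction t using Finset.induction_on with
  | empty => simpa using convexOn_const (0:ℝ) hs
  | insert _ _ hnot ih =>
    simp only [Finset.sum_insert hnot]
    exact (h _ (Finset.mem_insert_self _ _)).add
      (ih fun i hi => h i (Finset.mem_insert_of_mem hi))

/-- The reparametrized logistic log-likelihood is concave on the region
`q > 0`. -/
theorem logistic_loglik_concave (n d : ℕ) (hn : 0 < n) (hd : 0 < d)
    (y : Fin n → ℝ) (x : Fin n → Fin (d + 1) → ℝ) :
    ConcaveOn ℝ {pq : (Fin (d + 1) → ℝ) × ℝ | 0 < pq.2}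
      (fun pq => (n : ℝ) * Real.log pq.2
        + ∑ i, (y i * pq.2 - ∑ j, pq.1 j * x i j)
        - 2 * ∑ i, Real.log (1 + Real.exp (y i * pq.2 - ∑ j, pq.1 j * x i j))) := by
  set S : Set ((Fin (d + 1) → ℝ) × ℝ) := {pq | 0 < pq.2} with hSdef
  have hS : Convex ℝ S := (convex_Ioi (0:ℝ)).linear_preimage (LinearMap.snd ℝ _ ℝ)
  -- the linear maps
  let L : Fin n → (((Fin (d + 1) → ℝ) × ℝ) →ₗ[ℝ] ℝ) := fun i =>
    { toFun := fun pq => y i * pq.2 - ∑ j, pq.1 j * x i j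
      map_add' := by
        intro a b
        simp only [Prod.fst_add, Prod.snd_add, Pi.add_apply, add_mul]
        rw [Finset.sum_add_distrib]
        ring
      map_smul' := by
        intro c a
        simp only [Prod.smul_fst, Prod.smul_snd, Pi.smul_apply, smul_eq_mul,
          RingHom.id_apply]
        simp only [mul_assoc]
        rw [← Finset.mul_sum]
        ring }
  have h1 : ConcaveOn ℝ S (fun pq : (Fin (d + 1) → ℝ) × ℝ => (n : ℝ) * Real.log pq.2) := by
    have hlog := (strictConcaveOn_log_Ioi.concaveOn).comp_affineMap
      (LinearMap.snd ℝ (Fin (d + 1) → ℝ) ℝ).toAffineMap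
    have := hlog.smul (c := (n : ℝ)) (by positivity)
    exact this
  have h2 : ConcaveOn ℝ S
      (fun pq : (Fin (d + 1) → ℝ) × ℝ => ∑ i, (y i * pq.2 - ∑ j, pq.1 j * x i j)) := by
    exact my_concaveOn_sum hS Finset.univ _ (fun i _ => (L i).concaveOn hS)
  have h3 : ConvexOn ℝ S
      (fun pq : (Fin (d + 1) → ℝ) × ℝ =>
        (2:ℝ) * ∑ i, Real.log (1 + Real.exp (y i * pq.2 - ∑ j, pq.1 j * x i j))) := by
    have hsum : ConvexOn ℝ S
        (fun pq : (Fin (d + 1) → ℝ) × ℝ =>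
          ∑ i, Real.log (1 + Real.exp (y i * pq.2 - ∑ j, pq.1 j * x i j))) := by
      refine my_convexOn_sum hS Finset.univ _ (fun i _ => ?_)
      have := (my_convexOn_log_one_add_exp.comp_affineMap (L i).toAffineMap).subset
        (fun z _ => Set.mem_univ _) hS
      exact this
    have := hsum.smul (c := (2:ℝ)) (by norm_num)
    exact this
  exact (h1.add h2).sub h3
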